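/- Let s ≥ 1 and z₀ ∈ ℝ^s. Set Q = Σ_{r=2}^N Q^r and Ē = Σ_{r=2}^N E^r. Then: (i) Q is positive semidefinite with rank Q = N − 1, and the submatrix of Q on rows and columns {2,…,N} is the (N−1)×(N−1) identity matrix; (ii) u₂(z₀)ᵀ Q u₂(z₀) = 0; (iii) for every z ∈ ℝ^s, u₂(z)ᵀ Q u₂(z) − u₂(z₀)ᵀ Q u₂(z₀) = (u₂(z) − u₂(z₀))ᵀ Ē (u₂(z) − u₂(z₀)) = u₂(z)ᵀ Q u₂(z), so that Γ = Q itself is a positive semidefinite Gram matrix of rank N − 1 for the polynomial z ↦ u₂(z)ᵀ Q u₂(z) − u₂(z₀)ᵀ Q u₂(z₀). -/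

import Mathlib

open Matrix

noncomputable section

/-- Index set for the monomials of degree at most `2` in `s` variables: pairs
`(i, j)` with `i ≤ j` in `Fin (s+1)`, where index `0` stands for the constant `1`.
Its cardinality is `N = (s+1)(s+2)/2`. -/
abbrev MonIdx (s : ℕ) := {p : Fin (s + 1) × Fin (s + 1) // p.1 ≤ p.2}

/-- The index of the constant monomial `1` (the "first" entry of `u₂`). -/
def idx1 (s : ℕ) : MonIdx s := ⟨(0, 0), le_refl _⟩

/-- Extended variable vector: `extv z 0 = 1` and `extv z (i+1) = z i`. -/
def extv {s : ℕ} (z : Fin s → ℝ) : Fin (s + 1) → ℝ := Fin.cons 1 z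

/-- `u₂ z` : the vector of all monomials of degree at most `2` in `z`;
its entry at `⟨(i, j), _⟩` is `z_i z_j` (with the convention `z_0 = 1`). -/
def u2 {s : ℕ} (z : Fin s → ℝ) : MonIdx s → ℝ := fun p => extv z p.1.1 * extv z p.1.2

/-- `E^r` : the diagonal matrix whose `(r, r)` entry is `1` and all others are `0`. -/
def Emat {s : ℕ} (r : MonIdx s) : Matrix (MonIdx s) (MonIdx s) ℝ :=
  Matrix.single r r 1

/-- `Q^r` : the symmetric matrix whose only nonzero entries are
`[Q^r]₁₁ = ((u₂ z₀)ᵣ)²`, `[Q^r]₁ᵣ = [Q^r]ᵣ₁ = -(u₂ z₀)ᵣ` and `[Q^r]ᵣᵣ = 1`. -/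
def Qmat {s : ℕ} (z₀ : Fin s → ℝ) (r : MonIdx s) : Matrix (MonIdx s) (MonIdx s) ℝ :=
  Matrix.single (idx1 s) (idx1 s) ((u2 z₀ r) ^ 2)
    + Matrix.single (idx1 s) r (-(u2 z₀ r))
    + Matrix.single r (idx1 s) (-(u2 z₀ r))
    + Matrix.single r r 1

/-- `Q = Σ_{r ≠ 1} Q^r`. -/
def Qsum {s : ℕ} (z₀ : Fin s → ℝ) : Matrix (MonIdx s) (MonIdx s) ℝ :=
  ∑ r ∈ Finset.univ.filter (fun r => r ≠ idx1 s), Qmat z₀ r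

/-- `Ē = Σ_{r ≠ 1} E^r`. -/
def Ebar (s : ℕ) : Matrix (MonIdx s) (MonIdx s) ℝ :=
  ∑ r ∈ Finset.univ.filter (fun r => r ≠ idx1 s), Emat r

section aux
variable {s : ℕ}

lemma u2_idx1 (z : Fin s → ℝ) : u2 z (idx1 s) = 1 := by
  simp [u2, idx1, extv]

lemma sum_mulVec' {ι : Type*} (t : Finset ι) (A : ι → Matrix (MonIdx s) (MonIdx s) ℝ)
    (x : MonIdx s → ℝ) : (∑ r ∈ t, A r) *ᵥ x = ∑ r ∈ t, (A r *ᵥ x) := by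
  ext k
  simp only [Matrix.mulVec, dotProduct, Finset.sum_apply, Matrix.sum_apply, Finset.sum_mul]
  rw [Finset.sum_comm]

lemma Qmat_mulVec (z₀ : Fin s → ℝ) {r : MonIdx s} (hr : r ≠ idx1 s) (x : MonIdx s → ℝ)
    (q : MonIdx s) :
    (Qmat z₀ r *ᵥ x) q =
      (if q = idx1 s then (u2 z₀ r) ^ 2 * x (idx1 s) - u2 z₀ r * x r else 0)
      + (if q = r then x r - u2 z₀ r * x (idx1 s) else 0) := by
  simp only [Qmat, add_mulVec, single_mulVec, Pi.add_apply, Function.update_apply,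
    Pi.zero_apply]
  by_cases h1 : q = idx1 s <;> by_cases h2 : q = r
  · exact absurd (h2.symm.trans h1) hr
  · simp [h1, h2, hr, Ne.symm hr]; ring
  · simp [h1, h2, hr, Ne.symm hr]; ring
  · simp [h1, h2]

lemma dot_sum {ι : Type*} (x : MonIdx s → ℝ) (t : Finset ι) (f : ι → MonIdx s → ℝ) :
    x ⬝ᵥ (∑ r ∈ t, f r) = ∑ r ∈ t, x ⬝ᵥ f r := by
  simp only [dotProduct, Finset.sum_apply, Finset.mul_sum]
  rw [Finset.sum_comm]

lemma Qmat_quad (z₀ : Fin s → ℝ) {r : MonIdx s} (hr : r ≠ idx1 s) (x : MonIdx s → ℝ) :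
    x ⬝ᵥ (Qmat z₀ r *ᵥ x) = (x r - u2 z₀ r * x (idx1 s)) ^ 2 := by
  simp only [dotProduct, Qmat_mulVec z₀ hr, mul_add, mul_ite, mul_zero,
    Finset.sum_add_distrib, Finset.sum_ite_eq', Finset.mem_univ, if_true]
  ring

lemma Qsum_quad (z₀ : Fin s → ℝ) (x : MonIdx s → ℝ) :
    x ⬝ᵥ (Qsum z₀ *ᵥ x) =
      ∑ r ∈ Finset.univ.filter (fun r => r ≠ idx1 s),
        (x r - u2 z₀ r * x (idx1 s)) ^ 2 := by
  rw [Qsum, sum_mulVec', dot_sum]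
  exact Finset.sum_congr rfl fun r hr =>
    Qmat_quad z₀ (Finset.mem_filter.mp hr).2 x

lemma Ebar_quad (x : MonIdx s → ℝ) :
    x ⬝ᵥ (Ebar s *ᵥ x) =
      ∑ r ∈ Finset.univ.filter (fun r => r ≠ idx1 s), (x r) ^ 2 := by
  rw [Ebar, sum_mulVec', dot_sum]
  refine Finset.sum_congr rfl fun r hr => ?_
  simp only [Emat, dotProduct, single_mulVec, Function.update_apply, Pi.zero_apply,
    mul_ite, mul_zero, Finset.sum_ite_eq', Finset.mem_univ, if_true]
  ring

lemma Qsum_mulVec_ne (z₀ : Fin s → ℝ) (x : MonIdx s → ℝ) {q : MonIdx s} (hq : q ≠ idx1 s) :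
    (Qsum z₀ *ᵥ x) q = x q - u2 z₀ q * x (idx1 s) := by
  rw [Qsum, sum_mulVec']
  rw [Finset.sum_apply]
  have : ∀ r ∈ Finset.univ.filter (fun r => r ≠ idx1 s),
      (Qmat z₀ r *ᵥ x) q = if q = r then x r - u2 z₀ r * x (idx1 s) else 0 := by
    intro r hr
    rw [Qmat_mulVec z₀ (Finset.mem_filter.mp hr).2, if_neg hq, zero_add]
  rw [Finset.sum_congr rfl this, Finset.sum_ite_eq]
  simp [hq]

lemma Qsum_mulVec_u2 (z₀ : Fin s → ℝ) : Qsum z₀ *ᵥ u2 z₀ = 0 := by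
  ext q
  by_cases hq : q = idx1 s
  · subst hq
    rw [Qsum, sum_mulVec', Finset.sum_apply, Pi.zero_apply]
    refine Finset.sum_eq_zero fun r hr => ?_
    rw [Qmat_mulVec z₀ (Finset.mem_filter.mp hr).2, if_pos rfl,
      if_neg (Ne.symm (Finset.mem_filter.mp hr).2), u2_idx1]
    ring
  · rw [Qsum_mulVec_ne z₀ _ hq, u2_idx1, Pi.zero_apply]
    ring

lemma u2_ne_zero (z : Fin s → ℝ) : u2 z ≠ 0 := fun h => by
  have := congrFun h (idx1 s)
  rw [u2_idx1] at this
  simpa using this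

lemma ker_Qsum (z₀ : Fin s → ℝ) :
    LinearMap.ker (Qsum z₀).mulVecLin = Submodule.span ℝ {u2 z₀} := by
  ext x
  rw [LinearMap.mem_ker, Submodule.mem_span_singleton]
  constructor
  · intro hx
    refine ⟨x (idx1 s), ?_⟩
    ext q
    by_cases hq : q = idx1 s
    · subst hq; simp [u2_idx1]
    · have := congrFun hx q
      rw [Matrix.mulVecLin_apply, Qsum_mulVec_ne z₀ x hq, Pi.zero_apply] at this
      have : x q = u2 z₀ q * x (idx1 s) := by linarith
      simp [this]; ring
  · rintro ⟨c, rfl⟩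
    rw [_root_.map_smul, Matrix.mulVecLin_apply, Qsum_mulVec_u2, smul_zero]

lemma isHermitian_Qsum (z₀ : Fin s → ℝ) : (Qsum z₀).IsHermitian := by
  have std_symm : ∀ (i j : MonIdx s) (c : ℝ) (p q : MonIdx s),
      Matrix.single i j c q p = Matrix.single j i c p q := by
    intro i j c p q
    simp [Matrix.single, and_comm]
  refine Matrix.IsHermitian.ext fun p q => ?_
  rw [star_trivial]
  rw [Qsum, Matrix.sum_apply, Matrix.sum_apply]
  refine Finset.sum_congr rfl fun r _ => ?_
  simp only [Qmat, Matrix.add_apply]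
  rw [std_symm (idx1 s) (idx1 s) _ p q, std_symm (idx1 s) r _ p q,
    std_symm r (idx1 s) _ p q, std_symm r r _ p q]
  ring


/-- (i) `Q` is PSD of rank `N − 1` and its submatrix on rows/columns `≠ 1` is
the identity; (ii) `u₂(z₀)ᵀ Q u₂(z₀) = 0`; (iii) the quadratic-form difference equals the
`Ē`-form at `u₂(z) − u₂(z₀)` and equals `u₂(z)ᵀ Q u₂(z)`, so `Γ = Q` is a PSD Gram matrix
of rank `N − 1` for this polynomial. -/
theorem stmt3 (s : ℕ) (hs : 1 ≤ s) (z₀ : Fin s → ℝ) :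
    (Qsum z₀).PosSemidef ∧
    (Qsum z₀).rank = Fintype.card (MonIdx s) - 1 ∧
    (∀ p q : MonIdx s, p ≠ idx1 s → q ≠ idx1 s →
        Qsum z₀ p q = if p = q then 1 else 0) ∧
    u2 z₀ ⬝ᵥ (Qsum z₀ *ᵥ u2 z₀) = 0 ∧
    ∀ z : Fin s → ℝ,
      (u2 z ⬝ᵥ (Qsum z₀ *ᵥ u2 z) - u2 z₀ ⬝ᵥ (Qsum z₀ *ᵥ u2 z₀) =
        (u2 z - u2 z₀) ⬝ᵥ (Ebar s *ᵥ (u2 z - u2 z₀))) ∧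
      (u2 z ⬝ᵥ (Qsum z₀ *ᵥ u2 z) - u2 z₀ ⬝ᵥ (Qsum z₀ *ᵥ u2 z₀) =
        u2 z ⬝ᵥ (Qsum z₀ *ᵥ u2 z)) := by
  have h0 : u2 z₀ ⬝ᵥ (Qsum z₀ *ᵥ u2 z₀) = 0 := by
    rw [Qsum_mulVec_u2]; simp
  refine ⟨Matrix.PosSemidef.of_dotProduct_mulVec_nonneg (isHermitian_Qsum z₀) fun x => ?_, ?_, ?_, h0, fun z => ⟨?_, ?_⟩⟩
  · rw [star_trivial, Qsum_quad]
    exact Finset.sum_nonneg fun r _ => sq_nonneg _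
  · have h1 : (Qsum z₀).rank
        + Module.finrank ℝ ↥(LinearMap.ker (Qsum z₀).mulVecLin)
        = Fintype.card (MonIdx s) := by
      rw [Matrix.rank, LinearMap.finrank_range_add_finrank_ker,
        Module.finrank_fintype_fun_eq_card]
    have h2 : Module.finrank ℝ ↥(LinearMap.ker (Qsum z₀).mulVecLin) = 1 := by
      rw [ker_Qsum]; exact finrank_span_singleton (u2_ne_zero z₀)
    omega
  · intro p q hp hq
    rw [Qsum, Matrix.sum_apply]
    have he : ∀ r ∈ Finset.univ.filter (fun r : MonIdx s => r ≠ idx1 s),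
        Qmat z₀ r p q = if r = p ∧ r = q then (1 : ℝ) else 0 := by
      intro r _
      simp only [Qmat, Matrix.add_apply, Matrix.single, Matrix.of_apply]
      rw [if_neg (show ¬(idx1 s = p ∧ idx1 s = q) from fun h => hp h.1.symm),
        if_neg (show ¬(idx1 s = p ∧ r = q) from fun h => hp h.1.symm),
        if_neg (show ¬(r = p ∧ idx1 s = q) from fun h => hq h.2.symm)]
      simp
    rw [Finset.sum_congr rfl he]
    by_cases hpq : p = q
    · subst hpq
      simp only [and_self, Finset.sum_ite_eq', Finset.mem_filter, Finset.mem_univ, true_and]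
      simp [hp]
    · rw [if_neg hpq]
      exact Finset.sum_eq_zero fun r _ => if_neg (fun h => hpq (h.1.symm.trans h.2))
  · rw [h0, sub_zero, Qsum_quad, Ebar_quad]
    exact Finset.sum_congr rfl fun r _ => by simp [u2_idx1]
  · rw [h0, sub_zero]
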